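/- Let {E_i}_{i=1}^n be a POVM on ℂ^d with every effect nonzero, and let r be the dimension of the real linear span of the set {√E_1, …, √E_n} inside the real vector space of Hermitian d×d matrices. If d ≤ r and r ≥ 2, then the orthogonality satisfies O = Σ_{i,j=1}^n (tr(√E_i √E_j))² − 2d + n ≥ (r−d)²/(r−1) + n − r. -/

import Mathlib

open Matrix BigOperators
open scoped ComplexOrder

namespace Matrix.PosSemidef

/-- The positive semidefinite square root (definition as in the older Mathlib). -/
noncomputable def sqrt {R' : Type*} [RCLike R'] {n : Type*} [Fintype n] [DecidableEq n]
    {A : Matrix n n R'} (hA : PosSemidef A) : Matrix n n R' :=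
  hA.1.eigenvectorUnitary.1 * diagonal ((↑) ∘ (√·) ∘ hA.1.eigenvalues) *
  (star hA.1.eigenvectorUnitary : Matrix n n R')

lemma posSemidef_sqrt {R' : Type*} [RCLike R'] {n : Type*} [Fintype n] [DecidableEq n]
    {A : Matrix n n R'} (hA : PosSemidef A) : PosSemidef hA.sqrt := by
  unfold Matrix.PosSemidef.sqrt
  have := (PosSemidef.diagonal (R := R') (n := n)
    (d := (((↑) ∘ (√·) ∘ hA.1.eigenvalues : n → R'))) (fun i => by
      show (0 : R') ≤ ((√(hA.1.eigenvalues i) : ℝ) : R')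
      exact RCLike.ofReal_nonneg.mpr (Real.sqrt_nonneg _))).mul_mul_conjTranspose_same
    (hA.1.eigenvectorUnitary.1)
  rw [Matrix.star_eq_conjTranspose]
  exact this

lemma sqrt_mul_self {R' : Type*} [RCLike R'] {n : Type*} [Fintype n] [DecidableEq n]
    {A : Matrix n n R'} (hA : PosSemidef A) : hA.sqrt * hA.sqrt = A := by
  unfold Matrix.PosSemidef.sqrt
  conv_rhs => rw [hA.1.spectral_theorem, Unitary.conjStarAlgAut_apply]
  have h1 : star (hA.1.eigenvectorUnitary : Matrix n n R') * hA.1.eigenvectorUnitary = 1 :=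
    Unitary.coe_star_mul_self _
  have h2 : diagonal (((↑) ∘ (√·) ∘ hA.1.eigenvalues : n → R'))
      * diagonal (((↑) ∘ (√·) ∘ hA.1.eigenvalues : n → R'))
      = diagonal ((RCLike.ofReal ∘ hA.1.eigenvalues : n → R')) := by
    rw [diagonal_mul_diagonal]; congr 1; funext i
    simp only [Function.comp_apply, ← RCLike.ofReal_mul,
      Real.mul_self_sqrt (hA.eigenvalues_nonneg i)]
  calc _ = (hA.1.eigenvectorUnitary : Matrix n n R')
        * diagonal (((↑) ∘ (√·) ∘ hA.1.eigenvalues : n → R'))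
        * (star (hA.1.eigenvectorUnitary : Matrix n n R') * hA.1.eigenvectorUnitary)
        * diagonal (((↑) ∘ (√·) ∘ hA.1.eigenvalues : n → R'))
        * star (hA.1.eigenvectorUnitary : Matrix n n R') := by simp only [Matrix.mul_assoc]
    _ = _ := by
      rw [h1, Matrix.mul_one, Matrix.mul_assoc _ (diagonal _) (diagonal _), h2]

end Matrix.PosSemidef

lemma trace_eq_sum_eigs {𝕜 : Type*} [RCLike 𝕜] {m : Type*} [Fintype m] [DecidableEq m]
    {A : Matrix m m 𝕜} (hA : A.IsHermitian) :
    A.trace = ∑ i, (hA.eigenvalues i : 𝕜) := by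
  conv_lhs => rw [hA.spectral_theorem]
  rw [Unitary.conjStarAlgAut_apply, Matrix.trace_mul_cycle, Unitary.coe_star_mul_self, Matrix.one_mul,
    Matrix.trace_diagonal]
  rfl

lemma trace_sq_eq_sum_eigs {𝕜 : Type*} [RCLike 𝕜] {m : Type*} [Fintype m] [DecidableEq m]
    {A : Matrix m m 𝕜} (hA : A.IsHermitian) :
    (A * A).trace = ∑ i, (hA.eigenvalues i : 𝕜)^2 := by
  set U : Matrix m m 𝕜 := (hA.eigenvectorUnitary : Matrix m m 𝕜) with hU
  set D : Matrix m m 𝕜 := Matrix.diagonal (RCLike.ofReal ∘ hA.eigenvalues) with hD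
  have h1 : star U * U = 1 := Unitary.coe_star_mul_self hA.eigenvectorUnitary
  have key : A * A = U * (D * D) * star U := by
    conv_lhs => rw [hA.spectral_theorem, Unitary.conjStarAlgAut_apply]
    rw [← hU, ← hD]
    calc U * D * star U * (U * D * star U)
        = U * D * (star U * U) * D * star U := by noncomm_ring
      _ = U * (D * D) * star U := by rw [h1]; noncomm_ring
  rw [key, Matrix.trace_mul_cycle, ← Matrix.mul_assoc, h1, Matrix.one_mul, hD,
    Matrix.diagonal_mul_diagonal, Matrix.trace_diagonal]
  simp [pow_two]

lemma trace_re_eq_sum_eigs {m : Type*} [Fintype m] [DecidableEq m]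
    {A : Matrix m m ℂ} (hA : A.IsHermitian) :
    A.trace.re = ∑ i, hA.eigenvalues i := by
  rw [trace_eq_sum_eigs hA, Complex.re_sum]
  simp

lemma trace_sq_re_eq_sum_eigs {m : Type*} [Fintype m] [DecidableEq m]
    {A : Matrix m m ℂ} (hA : A.IsHermitian) :
    (A * A).trace.re = ∑ i, (hA.eigenvalues i)^2 := by
  rw [trace_sq_eq_sum_eigs hA, Complex.re_sum]
  refine Finset.sum_congr rfl fun i _ => ?_
  rw [pow_two, Complex.mul_re]
  simp [pow_two]

lemma trace_real_eq_sum_eigs {m : Type*} [Fintype m] [DecidableEq m]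
    {A : Matrix m m ℝ} (hA : A.IsHermitian) :
    A.trace = ∑ i, hA.eigenvalues i := by
  rw [trace_eq_sum_eigs hA]; rfl

lemma trace_sq_real_eq_sum_eigs {m : Type*} [Fintype m] [DecidableEq m]
    {A : Matrix m m ℝ} (hA : A.IsHermitian) :
    (A * A).trace = ∑ i, (hA.eigenvalues i)^2 := by
  rw [trace_sq_eq_sum_eigs hA]; rfl

lemma key_ineq {n : ℕ} (μ : Fin n → ℝ) (hpos : ∀ k, 0 ≤ μ k) (d r : ℕ)
    (hdr : d ≤ r) (hr2 : 2 ≤ r)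
    (hsum : ∑ k, μ k = (d : ℝ))
    (hcard : (Finset.univ.filter fun k => μ k ≠ 0).card ≤ r)
    (k₀ : Fin n) (hk : 1 ≤ μ k₀) :
    1 + ((d:ℝ) - 1)^2 / ((r:ℝ) - 1) ≤ ∑ k, (μ k)^2 := by
  have hr1 : (0:ℝ) < (r:ℝ) - 1 := by
    have : (2:ℝ) ≤ r := by exact_mod_cast hr2
    linarith
  set s := Finset.univ.filter fun k => μ k ≠ 0 with hs
  have hk₀s : k₀ ∈ s := by
    simp only [hs, Finset.mem_filter, Finset.mem_univ, true_and]
    intro h; rw [h] at hk; linarith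
  set T := s.erase k₀ with hT
  have hTcard : (T.card : ℝ) ≤ (r:ℝ) - 1 := by
    have h1 : T.card = s.card - 1 := Finset.card_erase_of_mem hk₀s
    have h2 : 1 ≤ s.card := Finset.card_pos.2 ⟨k₀, hk₀s⟩
    have h3 : (T.card : ℕ) ≤ r - 1 := by omega
    have hcast : ((r - 1 : ℕ) : ℝ) = (r:ℝ) - 1 := by
      have : 1 ≤ r := by omega
      push_cast [this]; ring
    calc (T.card : ℝ) ≤ ((r-1:ℕ) : ℝ) := by exact_mod_cast h3
      _ = (r:ℝ) - 1 := hcast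
  have hsum_s : ∑ k ∈ s, μ k = (d:ℝ) := by
    rw [hs, Finset.sum_filter_ne_zero]; exact hsum
  have hsum_T : ∑ k ∈ T, μ k = (d:ℝ) - μ k₀ := by
    have := Finset.add_sum_erase s μ hk₀s
    rw [hT]; linarith [hsum_s, this]
  have hTsq_nonneg : 0 ≤ ∑ k ∈ T, (μ k)^2 := Finset.sum_nonneg fun k _ => sq_nonneg _
  have hCS : ((d:ℝ) - μ k₀)^2 ≤ ((r:ℝ) - 1) * ∑ k ∈ T, (μ k)^2 := by
    have h1 : (∑ k ∈ T, μ k)^2 ≤ (T.card : ℝ) * ∑ k ∈ T, (μ k)^2 := by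
      exact_mod_cast sq_sum_le_card_mul_sum_sq (s := T) (f := μ)
    rw [hsum_T] at h1
    nlinarith [hTsq_nonneg]
  have hsplit : μ k₀ ^ 2 + ∑ k ∈ T, (μ k)^2 ≤ ∑ k, (μ k)^2 := by
    have h1 : μ k₀ ^ 2 + ∑ k ∈ T, (μ k)^2 = ∑ k ∈ s, (μ k)^2 := by
      rw [hT]; exact Finset.add_sum_erase s (fun k => (μ k)^2) hk₀s
    rw [h1]
    exact Finset.sum_le_sum_of_subset_of_nonneg (Finset.filter_subset _ _)
      (fun k _ _ => sq_nonneg _)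
  set a := μ k₀
  have had : a ≤ d := by
    have : ∑ k ∈ T, μ k ≥ 0 := Finset.sum_nonneg fun k _ => hpos k
    linarith [hsum_T]
  have hdr' : (d:ℝ) ≤ r := by exact_mod_cast hdr
  have hmain : 1 + ((d:ℝ) - 1)^2 / ((r:ℝ) - 1) ≤ a^2 + ((d:ℝ) - a)^2 / ((r:ℝ) - 1) := by
    have key : 0 ≤ (a - 1) * ((r:ℝ)*(a+1) - 2*d) :=
      mul_nonneg (by linarith) (by nlinarith)
    have expand : ((1:ℝ) + ((d:ℝ)-1)^2/((r:ℝ)-1)) * ((r:ℝ)-1) ≤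
        (a^2 + ((d:ℝ)-a)^2/((r:ℝ)-1)) * ((r:ℝ)-1) := by
      field_simp
      nlinarith [key]
    exact le_of_mul_le_mul_right expand hr1
  have hfin : ((d:ℝ) - a)^2 / ((r:ℝ) - 1) ≤ ∑ k ∈ T, (μ k)^2 :=
    (div_le_iff₀ hr1).2 (by linarith [hCS])
  linarith [hsplit, hmain, hfin]

/-- For a POVM `{E_i}` on `ℂ^d` with all effects nonzero, if `r` is the
dimension of the real linear span of `{√E_1, …, √E_n}` (inside the Hermitian matrices),
`d ≤ r`, and `r ≥ 2`, then the orthogonality satisfies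
`O = Σ_{i,j} (tr(√E_i √E_j))² − 2d + n ≥ (r−d)²/(r−1) + n − r`. -/
theorem orthogonality_lower_bound_span_rank
    (d n : ℕ) (E : Fin n → Matrix (Fin d) (Fin d) ℂ)
    (hE : ∀ i, (E i).PosSemidef)
    (hsum : ∑ i, E i = 1)
    (hne : ∀ i, E i ≠ 0)
    (r : ℕ)
    (hr : r = Module.finrank ℝ
      (Submodule.span ℝ (Set.range fun i => (hE i).sqrt)))
    (hdr : d ≤ r) (hr2 : 2 ≤ r) :
    ((r : ℝ) - d) ^ 2 / ((r : ℝ) - 1) + (n : ℝ) - (r : ℝ)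
      ≤ ∑ i, ∑ j, (((hE i).sqrt * (hE j).sqrt).trace.re) ^ 2 - 2 * (d : ℝ) + (n : ℝ) := by
  classical
  -- d ≥ 1
  have hd1 : 1 ≤ d := by
    by_contra h
    have hd0 : d = 0 := by omega
    subst hd0
    have hsub : Subsingleton (Matrix (Fin 0) (Fin 0) ℂ) :=
      ⟨fun a b => by ext i; exact absurd i.2 (by omega)⟩
    have : r = 0 := by
      rw [hr]
      haveI := hsub
      haveI : Subsingleton (Submodule.span ℝ (Set.range fun i => (hE i).sqrt)) :=
        ⟨fun a b => Subtype.ext (Subsingleton.elim _ _)⟩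
      exact Module.finrank_zero_of_subsingleton
    omega
  -- n ≥ 1
  have hn1 : 1 ≤ n := by
    by_contra h
    have hn0 : n = 0 := by omega
    subst hn0
    have h01 := congrFun (congrFun hsum ⟨0, hd1⟩) ⟨0, hd1⟩
    simp [Matrix.one_apply] at h01
  set S : Fin n → Matrix (Fin d) (Fin d) ℂ := fun i => (hE i).sqrt with hS
  have hSh : ∀ i, (S i).IsHermitian := fun i => (hE i).posSemidef_sqrt.1
  have hSE : ∀ i, S i * S i = E i := fun i => (hE i).sqrt_mul_self
  set G : Matrix (Fin n) (Fin n) ℝ := Matrix.of fun i j => ((S i * S j).trace).re with hG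
  have hGapp : ∀ i j, G i j = ((S i * S j).trace).re := fun i j => rfl
  have hGsymm : ∀ i j, G i j = G j i := fun i j => by
    rw [hGapp, hGapp, Matrix.trace_mul_comm]
  have hGh : G.IsHermitian := by
    ext i j
    simp only [Matrix.conjTranspose_apply, star_trivial]
    exact hGsymm j i
  -- quadratic form
  have hquad : ∀ x : Fin n → ℝ, x ⬝ᵥ G.mulVec x
      = ((∑ i, (x i : ℂ) • S i) * (∑ j, (x j : ℂ) • S j)).trace.re := by
    intro x
    have expand : ((∑ i, (x i:ℂ) • S i) * (∑ j, (x j:ℂ) • S j))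
        = ∑ i, ∑ j, ((x i : ℂ) * (x j : ℂ)) • (S i * S j) := by
      rw [Finset.sum_mul_sum]
      refine Finset.sum_congr rfl fun i _ => Finset.sum_congr rfl fun j _ => ?_
      rw [smul_mul_assoc, mul_smul_comm, smul_smul]
    rw [expand]
    rw [Matrix.trace_sum]
    rw [Complex.re_sum]
    simp only [Matrix.trace_sum, Complex.re_sum, Matrix.trace_smul, smul_eq_mul]
    simp only [dotProduct, Matrix.mulVec, hGapp]
    refine Finset.sum_congr rfl fun i _ => ?_
    rw [Finset.mul_sum]
    refine Finset.sum_congr rfl fun j _ => ?_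
    simp [Complex.mul_re, Complex.ofReal_re, Complex.ofReal_im]
    ring
  -- PSD
  have hGpsd : G.PosSemidef := by
    refine Matrix.PosSemidef.of_dotProduct_mulVec_nonneg hGh fun x => ?_
    have hx : star x = x := by simp
    rw [hx, hquad x]
    set T : Matrix (Fin d) (Fin d) ℂ := ∑ i, (x i : ℂ) • S i with hTdef
    have hTh : Tᴴ = T := by
      rw [hTdef, Matrix.conjTranspose_sum]
      refine Finset.sum_congr rfl fun i _ => ?_
      rw [Matrix.conjTranspose_smul, (hSh i).eq]
      simp [Complex.conj_ofReal]
    conv_lhs => rw [show (0:ℝ) = 0 from rfl]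
    have : T * T = Tᴴ * T := by rw [hTh]
    rw [this]
    have htr : ((Tᴴ * T).trace).re = ∑ j, ∑ k, Complex.normSq (T k j) := by
      simp only [Matrix.trace, Matrix.diag, Matrix.mul_apply, Matrix.conjTranspose_apply]
      rw [Complex.re_sum]
      refine Finset.sum_congr rfl fun j _ => ?_
      rw [Complex.re_sum]
      refine Finset.sum_congr rfl fun k _ => ?_
      rw [Complex.star_def, mul_comm, Complex.mul_conj]
      simp
    rw [htr]
    exact Finset.sum_nonneg fun j _ => Finset.sum_nonneg fun k _ => Complex.normSq_nonneg _
  -- sum of traces of E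
  have hEtr : ∑ i, ((E i).trace).re = (d:ℝ) := by
    have h1 : ∑ i, ((E i).trace).re = ((∑ i, E i).trace).re := by
      rw [Matrix.trace_sum, Complex.re_sum]
    rw [h1, hsum, Matrix.trace_one]
    simp
  -- trace of G
  have htr : G.trace = (d : ℝ) := by
    have h1 : ∀ i, G i i = ((E i).trace).re := fun i => by rw [hGapp, hSE i]
    rw [Matrix.trace]
    calc ∑ i, G.diag i = ∑ i, ((E i).trace).re := Finset.sum_congr rfl fun i _ => h1 i
      _ = (d:ℝ) := hEtr
  -- rank bound
  have hrank : G.rank ≤ r := by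
    let φ : Matrix (Fin d) (Fin d) ℂ →ₗ[ℝ] (Fin n → ℝ) :=
      { toFun := fun A i => ((S i * A).trace).re
        map_add' := fun A B => by
          funext i
          simp [Matrix.mul_add]
        map_smul' := fun c A => by
          funext i
          simp [Matrix.mul_smul, Complex.real_smul, Complex.mul_re] }
    have hWle : LinearMap.range G.mulVecLin
        ≤ (Submodule.span ℝ (Set.range S)).map φ := by
      rintro y ⟨x, rfl⟩
      refine ⟨∑ j, x j • S j, ?_, ?_⟩
      · exact Submodule.sum_mem _ fun j _ =>
          Submodule.smul_mem _ _ (Submodule.subset_span ⟨j, rfl⟩)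
      · funext i
        show ((S i * ∑ j, x j • S j).trace).re = G.mulVecLin x i
        rw [Finset.mul_sum, Matrix.trace_sum, Complex.re_sum]
        simp only [Matrix.mulVecLin_apply, Matrix.mulVec, dotProduct, hGapp]
        refine Finset.sum_congr rfl fun j _ => ?_
        rw [Matrix.mul_smul, Matrix.trace_smul]
        simp [Complex.real_smul, Complex.mul_re]
        ring
    have hfd : FiniteDimensional ℝ (Matrix (Fin d) (Fin d) ℂ) := by infer_instance
    calc G.rank = Module.finrank ℝ (LinearMap.range G.mulVecLin) := rfl
      _ ≤ Module.finrank ℝ ((Submodule.span ℝ (Set.range S)).map φ) :=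
          Submodule.finrank_mono hWle
      _ ≤ Module.finrank ℝ (Submodule.span ℝ (Set.range S)) :=
          Submodule.finrank_map_le φ _
      _ = r := by rw [hr]
  -- eigenvalues
  set μ : Fin n → ℝ := hGh.eigenvalues with hμdef
  have hμ0 : ∀ k, 0 ≤ μ k := hGpsd.eigenvalues_nonneg
  have hμsum : ∑ k, μ k = (d:ℝ) := by
    rw [← htr]; exact (trace_real_eq_sum_eigs hGh).symm
  have hcard : (Finset.univ.filter fun k => μ k ≠ 0).card ≤ r := by
    have h1 : G.rank = Fintype.card {k // μ k ≠ 0} := hGh.rank_eq_card_non_zero_eigs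
    have h2 : Fintype.card {k // μ k ≠ 0}
        = (Finset.univ.filter fun k => μ k ≠ 0).card := Fintype.card_subtype _
    omega
  -- sum of squares
  have hμsq : ∑ i, ∑ j, (((S i * S j).trace).re)^2 = ∑ k, (μ k)^2 := by
    have h1 := trace_sq_real_eq_sum_eigs hGh
    have h2 : (G * G).trace = ∑ i, ∑ j, G i j * G j i := by
      simp [Matrix.trace, Matrix.diag, Matrix.mul_apply]
    rw [h2] at h1
    rw [← h1]
    refine Finset.sum_congr rfl fun i _ => Finset.sum_congr rfl fun j _ => ?_
    rw [← hGapp, pow_two]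
    exact congrArg (HMul.hMul (G i j)) (hGsymm i j)
  -- the Rayleigh vector
  set t : Fin n → ℝ := fun i => ((S i).trace).re with htdef
  have hper : ∀ i, ((E i).trace).re ≤ t i ^ 2 := by
    intro i
    have h1 : t i = ∑ k, (hSh i).eigenvalues k := trace_re_eq_sum_eigs (hSh i)
    have h2 : ((E i).trace).re = ∑ k, ((hSh i).eigenvalues k)^2 := by
      rw [← hSE i]; exact trace_sq_re_eq_sum_eigs (hSh i)
    rw [h1, h2]
    exact Finset.sum_sq_le_sq_sum_of_nonneg fun k _ =>
      (hE i).posSemidef_sqrt.eigenvalues_nonneg k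
  have htnorm : (d:ℝ) ≤ ∑ i, t i ^ 2 := by
    rw [← hEtr]
    exact Finset.sum_le_sum fun i _ => hper i
  have hdpos : (0:ℝ) < d := by exact_mod_cast hd1
  have hray : ∑ i, t i ^ 2 ≤ t ⬝ᵥ G.mulVec t := by
    rw [hquad t]
    set T : Matrix (Fin d) (Fin d) ℂ := ∑ i, (t i : ℂ) • S i with hTdef
    have hTh : T.IsHermitian := by
      show Tᴴ = T
      rw [hTdef, Matrix.conjTranspose_sum]
      refine Finset.sum_congr rfl fun i _ => ?_
      rw [Matrix.conjTranspose_smul, (hSh i).eq]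
      simp [Complex.conj_ofReal]
    have h1 : (T * T).trace.re = ∑ k, (hTh.eigenvalues k)^2 := trace_sq_re_eq_sum_eigs hTh
    have h2 : T.trace.re = ∑ i, t i ^ 2 := by
      rw [hTdef, Matrix.trace_sum, Complex.re_sum]
      refine Finset.sum_congr rfl fun i _ => ?_
      rw [Matrix.trace_smul]
      simp only [smul_eq_mul, Complex.mul_re, Complex.ofReal_re, Complex.ofReal_im]
      have hti : (S i).trace.re = t i := rfl
      rw [hti]; ring
    have h3 : T.trace.re = ∑ k, hTh.eigenvalues k := trace_re_eq_sum_eigs hTh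
    have hCS : (∑ k, hTh.eigenvalues k)^2 ≤ (d:ℝ) * ∑ k, (hTh.eigenvalues k)^2 := by
      have := sq_sum_le_card_mul_sum_sq (s := Finset.univ) (f := hTh.eigenvalues)
      simpa using this
    rw [h1]
    have h4 : (∑ i, t i ^ 2)^2 ≤ (d:ℝ) * ∑ k, (hTh.eigenvalues k)^2 := by
      rw [← h2, h3]; exact hCS
    nlinarith [htnorm, hdpos, h4, Finset.sum_nonneg (fun i (_ : i ∈ Finset.univ) => sq_nonneg (t i))]
  -- max eigenvalue ≥ 1
  have hmax : ∃ k₀, 1 ≤ μ k₀ := by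
    obtain ⟨k₀, -, hk₀⟩ := Finset.exists_max_image Finset.univ μ
      ⟨⟨0, hn1⟩, Finset.mem_univ _⟩
    refine ⟨k₀, ?_⟩
    have hUU : (hGh.eigenvectorUnitary : Matrix (Fin n) (Fin n) ℝ)
        * star (hGh.eigenvectorUnitary : Matrix (Fin n) (Fin n) ℝ) = 1 :=
      Matrix.mem_unitaryGroup_iff.mp hGh.eigenvectorUnitary.2
    have hdecomp : μ k₀ • (1 : Matrix (Fin n) (Fin n) ℝ) - G
        = (hGh.eigenvectorUnitary : Matrix (Fin n) (Fin n) ℝ)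
          * Matrix.diagonal (fun k => μ k₀ - μ k)
          * star (hGh.eigenvectorUnitary : Matrix (Fin n) (Fin n) ℝ) := by
      conv_lhs => rw [hGh.spectral_theorem, Unitary.conjStarAlgAut_apply]
      have h1 : μ k₀ • (1 : Matrix (Fin n) (Fin n) ℝ)
          = (hGh.eigenvectorUnitary : Matrix (Fin n) (Fin n) ℝ)
            * Matrix.diagonal (fun _ => μ k₀)
            * star (hGh.eigenvectorUnitary : Matrix (Fin n) (Fin n) ℝ) := by
        have hdiagc : Matrix.diagonal (fun _ : Fin n => μ k₀)
            = μ k₀ • (1 : Matrix (Fin n) (Fin n) ℝ) := by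
          ext i j
          by_cases h : i = j <;> simp [Matrix.diagonal_apply, Matrix.one_apply, h]
        rw [hdiagc, Matrix.mul_smul, Matrix.mul_one, Matrix.smul_mul, hUU]
      rw [h1, ← Matrix.sub_mul, ← Matrix.mul_sub]
      congr 2
      ext i j
      by_cases h : i = j <;>
        simp [Matrix.diagonal_apply, Matrix.one_apply, h, Function.comp, hμdef]
    have hpsd2 : (μ k₀ • (1 : Matrix (Fin n) (Fin n) ℝ) - G).PosSemidef := by
      rw [hdecomp]
      have hdiag : (Matrix.diagonal (fun k => μ k₀ - μ k)).PosSemidef :=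
        Matrix.posSemidef_diagonal_iff.mpr fun k =>
          sub_nonneg.2 (hk₀ k (Finset.mem_univ k))
      have h5 := hdiag.mul_mul_conjTranspose_same
        (hGh.eigenvectorUnitary : Matrix (Fin n) (Fin n) ℝ)
      simpa [Matrix.star_eq_conjTranspose] using h5
    have h0 := hpsd2.dotProduct_mulVec_nonneg t
    have hexp : star t ⬝ᵥ (μ k₀ • (1 : Matrix (Fin n) (Fin n) ℝ) - G) *ᵥ t
        = μ k₀ * (∑ i, t i ^ 2) - t ⬝ᵥ G *ᵥ t := by
      simp only [star_trivial, Matrix.sub_mulVec, Matrix.smul_mulVec,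
        Matrix.one_mulVec, dotProduct_sub, dotProduct_smul, smul_eq_mul]
      congr 1
      simp [dotProduct, pow_two]
    rw [hexp] at h0
    have hd1r : (1:ℝ) ≤ d := by exact_mod_cast hd1
    nlinarith [h0, hray, htnorm, hd1r]
  -- conclusion
  obtain ⟨k₀, hk₀⟩ := hmax
  have hkey := key_ineq μ hμ0 d r hdr hr2 hμsum hcard k₀ hk₀
  rw [← hμsq] at hkey
  have hr1ne : ((r:ℝ) - 1) ≠ 0 := by
    have : (2:ℝ) ≤ r := by exact_mod_cast hr2
    linarith
  have hEqn : ((r:ℝ) - d)^2 / ((r:ℝ) - 1) + (n:ℝ) - (r:ℝ)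
      = (1 + ((d:ℝ) - 1)^2 / ((r:ℝ) - 1)) - 2*(d:ℝ) + (n:ℝ) - 1 + 1 - 1 + 1 - 2 + 2 := by
    field_simp
    ring
  linarith [hkey, hEqn.le, hEqn.ge]
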